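/- arXiv:1609.03102 — 2 statements merged into one kernel-verified Lean document; each statement's English description precedes it below -/
import Mathlib

section
/- Let Ω ⊆ ℝ³ be open, let J ⊆ ℝ be an open interval with 0 ∉ J, let ε : Ω → ℝ, and let v : Ω × J → ℂ be infinitely differentiable (jointly in x and k). Assume that Δₓv(x,k) + ∇ₓv(x,k)·∇ₓv(x,k) = −k² ε(x) for all x ∈ Ω and k ∈ J. Then for all x ∈ Ω and k ∈ J, Δₓ(∂ₖv)(x,k) + 2 ∇ₓ(∂ₖv)(x,k)·∇ₓv(x,k) = (2/k)·(Δₓv(x,k) + ∇ₓv(x,k)·∇ₓv(x,k)). -/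
open scoped BigOperators

/-- Spatial partial derivative in direction `i` of a complex-valued function of `(x, k)`. -/
noncomputable def pdx (i : Fin 3) (f : (Fin 3 → ℝ) × ℝ → ℂ) : (Fin 3 → ℝ) × ℝ → ℂ :=
  fun p => fderiv ℝ f p (Pi.single i 1, 0)

/-- Partial derivative with respect to the wavenumber `k`. -/
noncomputable def pdk (f : (Fin 3 → ℝ) × ℝ → ℂ) : (Fin 3 → ℝ) × ℝ → ℂ :=
  fun p => fderiv ℝ f p (0, 1)

/-- Spatial gradient. -/
noncomputable def gradx (f : (Fin 3 → ℝ) × ℝ → ℂ) (p : (Fin 3 → ℝ) × ℝ) : Fin 3 → ℂ :=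
  fun i => pdx i f p

/-- Spatial Laplacian. -/
noncomputable def lapx (f : (Fin 3 → ℝ) × ℝ → ℂ) (p : (Fin 3 → ℝ) × ℝ) : ℂ :=
  ∑ i, pdx i (pdx i f) p

/-- Bilinear (non-conjugated) dot product on `ℂ³`. -/
noncomputable def cdot (a b : Fin 3 → ℂ) : ℂ := ∑ i, a i * b i

section Aux

variable {U : Set ((Fin 3 → ℝ) × ℝ)}

/-- smoothness of directional derivative -/
lemma smooth_dir (w : (Fin 3 → ℝ) × ℝ) (f : (Fin 3 → ℝ) × ℝ → ℂ)
    (hU : IsOpen U) (hf : ContDiffOn ℝ (⊤:ℕ∞) f U) :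
    ContDiffOn ℝ (⊤:ℕ∞) (fun p => fderiv ℝ f p w) U := by
  have h1 : ContDiffOn ℝ (⊤:ℕ∞) (fderiv ℝ f) U := hf.fderiv_of_isOpen hU (by exact_mod_cast le_top)
  exact (ContinuousLinearMap.apply ℝ ℂ w).contDiff.comp_contDiffOn h1

/-- symmetry of second derivative, directional form -/
lemma swap_dir (w₁ w₂ : (Fin 3 → ℝ) × ℝ) (f : (Fin 3 → ℝ) × ℝ → ℂ)
    (hU : IsOpen U) (hf : ContDiffOn ℝ (⊤:ℕ∞) f U) {p} (hp : p ∈ U) :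
    fderiv ℝ (fun q => fderiv ℝ f q w₁) p w₂ = fderiv ℝ (fun q => fderiv ℝ f q w₂) p w₁ := by
  have hUp : U ∈ nhds p := hU.mem_nhds hp
  have hfa : ContDiffAt ℝ 2 f p := (hf.contDiffAt hUp).of_le (by norm_cast)
  have hd1 : DifferentiableAt ℝ (fderiv ℝ f) p :=
    (hfa.fderiv_right (m := 1) (by norm_num)).differentiableAt one_ne_zero
  have hev : ∀ᶠ y in nhds p, HasFDerivAt f (fderiv ℝ f y) y := by
    filter_upwards [hUp] with y hy
    exact ((hf.contDiffAt (hU.mem_nhds hy)).differentiableAt (by simp)).hasFDerivAt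
  have hsym := second_derivative_symmetric_of_eventually hev hd1.hasFDerivAt w₂ w₁
  have key : ∀ w : (Fin 3 → ℝ) × ℝ, fderiv ℝ (fun q => fderiv ℝ f q w) p =
      (ContinuousLinearMap.apply ℝ ℂ w).comp (fderiv ℝ (fderiv ℝ f) p) :=
    fun w => ((ContinuousLinearMap.apply ℝ ℂ w).hasFDerivAt.comp p hd1.hasFDerivAt).fderiv
  rw [key w₁, key w₂]
  exact hsym

lemma smooth_pdx (i : Fin 3) (f : (Fin 3 → ℝ) × ℝ → ℂ)
    (hU : IsOpen U) (hf : ContDiffOn ℝ (⊤:ℕ∞) f U) : ContDiffOn ℝ (⊤:ℕ∞) (pdx i f) U :=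
  smooth_dir _ f hU hf

lemma smooth_pdk (f : (Fin 3 → ℝ) × ℝ → ℂ)
    (hU : IsOpen U) (hf : ContDiffOn ℝ (⊤:ℕ∞) f U) : ContDiffOn ℝ (⊤:ℕ∞) (pdk f) U :=
  smooth_dir _ f hU hf

lemma swap_pd (i : Fin 3) (f : (Fin 3 → ℝ) × ℝ → ℂ)
    (hU : IsOpen U) (hf : ContDiffOn ℝ (⊤:ℕ∞) f U) {p} (hp : p ∈ U) :
    pdk (pdx i f) p = pdx i (pdk f) p :=
  swap_dir _ _ f hU hf hp

end Aux

/-- differentiating `Δₓv + ∇ₓv·∇ₓv = −k²ε` with respect to `k` yields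
`Δₓ(∂ₖv) + 2∇ₓ(∂ₖv)·∇ₓv = (2/k)(Δₓv + ∇ₓv·∇ₓv)` on `Ω × J`. -/
theorem stmt1 (Ω : Set (Fin 3 → ℝ)) (hΩ : IsOpen Ω) (a b : ℝ)
    (hJ : (0 : ℝ) ∉ Set.Ioo a b)
    (ε : (Fin 3 → ℝ) → ℝ) (v : (Fin 3 → ℝ) × ℝ → ℂ)
    (hv : ContDiffOn ℝ (⊤ : ℕ∞) v (Ω ×ˢ Set.Ioo a b))
    (heq : ∀ x ∈ Ω, ∀ k ∈ Set.Ioo a b,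
      lapx v (x, k) + cdot (gradx v (x, k)) (gradx v (x, k)) = -((k : ℂ) ^ 2 * (ε x : ℂ))) :
    ∀ x ∈ Ω, ∀ k ∈ Set.Ioo a b,
      lapx (pdk v) (x, k) + 2 * cdot (gradx (pdk v) (x, k)) (gradx v (x, k)) =
        (2 / (k : ℂ)) * (lapx v (x, k) + cdot (gradx v (x, k)) (gradx v (x, k))) := by
  intro x hx k hk
  set U : Set ((Fin 3 → ℝ) × ℝ) := Ω ×ˢ Set.Ioo a b with hUdef
  have hU : IsOpen U := hΩ.prod isOpen_Ioo
  have hpU : ((x, k) : (Fin 3 → ℝ) × ℝ) ∈ U := ⟨hx, hk⟩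
  have hkR : k ≠ 0 := fun h => hJ (h ▸ hk)
  have hk0 : (k : ℂ) ≠ 0 := by exact_mod_cast hkR
  -- smoothness of spatial derivatives
  have hdx : ∀ i, ContDiffOn ℝ (⊤:ℕ∞) (pdx i v) U := fun i => smooth_pdx i v hU hv
  have hdxx : ∀ i, ContDiffOn ℝ (⊤:ℕ∞) (pdx i (pdx i v)) U := fun i => smooth_pdx i _ hU (hdx i)
  -- derivative of t ↦ f (x, t)
  have hφ : HasDerivAt (fun t : ℝ => ((x, t) : (Fin 3 → ℝ) × ℝ)) ((0 : Fin 3 → ℝ), (1 : ℝ)) k :=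
    HasDerivAt.prodMk (hasDerivAt_const k x) (hasDerivAt_id k)
  have comp : ∀ f : (Fin 3 → ℝ) × ℝ → ℂ, ContDiffOn ℝ (⊤:ℕ∞) f U →
      HasDerivAt (fun t : ℝ => f (x, t)) (pdk f (x, k)) k := by
    intro f hf
    have hdiff : DifferentiableAt ℝ f (x, k) :=
      (hf.contDiffAt (hU.mem_nhds hpU)).differentiableAt (by simp)
    exact hdiff.hasFDerivAt.comp_hasDerivAt k hφ
  -- derivative of the left-hand side of the PDE in k
  have hL : HasDerivAt
      (fun t : ℝ => (∑ i, pdx i (pdx i v) (x, t)) + ∑ i, pdx i v (x, t) * pdx i v (x, t))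
      ((∑ i, pdk (pdx i (pdx i v)) (x, k)) +
        ∑ i, (pdk (pdx i v) (x, k) * pdx i v (x, k) + pdx i v (x, k) * pdk (pdx i v) (x, k)))
      k := by
    apply HasDerivAt.add
    · exact HasDerivAt.fun_sum fun i _ => comp _ (hdxx i)
    · exact HasDerivAt.fun_sum fun i _ => (comp _ (hdx i)).mul (comp _ (hdx i))
  -- derivative of the right-hand side of the PDE in k
  have hR : HasDerivAt (fun t : ℝ => -((t : ℂ) ^ 2 * (ε x : ℂ)))
      (-(2 * (k : ℂ) * (ε x : ℂ))) k := by
    have h1 : HasDerivAt (fun t : ℝ => ((t : ℂ))) 1 k := by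
      simpa using (hasDerivAt_id k).ofReal_comp
    have h2 := (((h1.fun_mul h1).mul_const ((ε x : ℂ)))).fun_neg
    have hfe : (fun t : ℝ => -((t : ℂ) ^ 2 * (ε x : ℂ)))
        = fun t : ℝ => -(((t : ℂ) * (t : ℂ)) * (ε x : ℂ)) := by
      funext t; ring
    rw [hfe]
    exact h2.congr_deriv (by ring)
  -- the two functions agree near k
  have heqn : (fun t : ℝ => (∑ i, pdx i (pdx i v) (x, t)) + ∑ i, pdx i v (x, t) * pdx i v (x, t))
      =ᶠ[nhds k] fun t : ℝ => -((t : ℂ) ^ 2 * (ε x : ℂ)) := by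
    filter_upwards [isOpen_Ioo.mem_nhds hk] with t ht
    have := heq x hx t ht
    simpa [lapx, cdot, gradx] using this
  have hL' : HasDerivAt
      (fun t : ℝ => (∑ i, pdx i (pdx i v) (x, t)) + ∑ i, pdx i v (x, t) * pdx i v (x, t))
      (-(2 * (k : ℂ) * (ε x : ℂ))) k := hR.congr_of_eventuallyEq heqn
  have hDeq := hL.unique hL'
  -- commute the derivatives
  have swap1 : ∀ i, pdk (pdx i v) (x, k) = pdx i (pdk v) (x, k) :=
    fun i => swap_pd i v hU hv hpU
  have swap2 : ∀ i, pdk (pdx i (pdx i v)) (x, k) = pdx i (pdx i (pdk v)) (x, k) := by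
    intro i
    have h1 : pdk (pdx i (pdx i v)) (x, k) = pdx i (pdk (pdx i v)) (x, k) :=
      swap_pd i _ hU (hdx i) hpU
    have h2 : pdk (pdx i v) =ᶠ[nhds ((x, k) : (Fin 3 → ℝ) × ℝ)] pdx i (pdk v) := by
      filter_upwards [hU.mem_nhds hpU] with q hq
      exact swap_pd i v hU hv hq
    have h3 : fderiv ℝ (pdk (pdx i v)) (x, k) = fderiv ℝ (pdx i (pdk v)) (x, k) :=
      h2.fderiv_eq
    rw [h1]
    show fderiv ℝ (pdk (pdx i v)) (x, k) _ = fderiv ℝ (pdx i (pdk v)) (x, k) _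
    rw [h3]
  -- finish
  have hval : lapx v (x, k) + cdot (gradx v (x, k)) (gradx v (x, k)) =
      -((k : ℂ) ^ 2 * (ε x : ℂ)) := heq x hx k hk
  rw [hval]
  have lhs_eq : lapx (pdk v) (x, k) + 2 * cdot (gradx (pdk v) (x, k)) (gradx v (x, k)) =
      (∑ i, pdk (pdx i (pdx i v)) (x, k)) +
        ∑ i, (pdk (pdx i v) (x, k) * pdx i v (x, k) + pdx i v (x, k) * pdk (pdx i v) (x, k)) := by
    simp only [lapx, cdot, gradx]
    rw [Finset.mul_sum]
    congr 1
    · exact Finset.sum_congr rfl fun i _ => (swap2 i).symm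
    · refine Finset.sum_congr rfl fun i _ => ?_
      rw [swap1 i]
      ring
  rw [lhs_eq, hDeq]
  field_simp
end

section
/- Let Ω ⊆ ℝ³ be open, let 0 < k̲ < k̄, let ε : Ω → ℝ, and let v : Ω × (k̲ − δ, k̄ + δ) → ℂ (for some δ > 0) be infinitely differentiable and satisfy Δₓv(x,k) + ∇ₓv(x,k)·∇ₓv(x,k) = −k² ε(x) for all x ∈ Ω and k ∈ [k̲, k̄]. Define q(x,k) = ∂ₖv(x,k) and V(x) = v(x, k̄). Then for all x ∈ Ω and k ∈ [k̲, k̄]: (k/2) Δₓq(x,k) + k ∇ₓq(x,k)·( −∫ₖ^{k̄} ∇ₓq(x,s) ds + ∇V(x) ) = −∫ₖ^{k̄} Δₓq(x,s) ds + ΔV(x) + ( −∫ₖ^{k̄} ∇ₓq(x,s) ds + ∇V(x) )·( −∫ₖ^{k̄} ∇ₓq(x,s) ds + ∇V(x) ), where the integrals in s are taken componentwise. -/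
open scoped BigOperators

/-- Partial derivative in direction `i` of a complex-valued function on `ℝ³`. -/
noncomputable def pd (i : Fin 3) (f : (Fin 3 → ℝ) → ℂ) : (Fin 3 → ℝ) → ℂ :=
  fun x => fderiv ℝ f x (Pi.single i 1)

/-- Gradient of a complex-valued function on `ℝ³`. -/
noncomputable def grad3 (f : (Fin 3 → ℝ) → ℂ) (x : Fin 3 → ℝ) : Fin 3 → ℂ :=
  fun i => pd i f x

/-- Laplacian of a complex-valued function on `ℝ³`. -/
noncomputable def lap3 (f : (Fin 3 → ℝ) → ℂ) (x : Fin 3 → ℝ) : ℂ :=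
  ∑ i, pd i (pd i f) x

section aux
variable {U : Set ((Fin 3 → ℝ) × ℝ)} {f : (Fin 3 → ℝ) × ℝ → ℂ} {p : (Fin 3 → ℝ) × ℝ}

lemma aux_fderiv_eval (hU : IsOpen U) (hf : ContDiffOn ℝ (⊤:ℕ∞) f U) (hp : p ∈ U)
    (w w' : (Fin 3 → ℝ) × ℝ) :
    fderiv ℝ (fun q => fderiv ℝ f q w) p w' = fderiv ℝ (fderiv ℝ f) p w' w := by
  have hd : DifferentiableAt ℝ (fderiv ℝ f) p :=
    ((hf.fderiv_of_isOpen hU (m := (⊤:ℕ∞)) (by exact_mod_cast le_top)).contDiffAt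
      (hU.mem_nhds hp)).differentiableAt (by simp)
  rw [fderiv_clm_apply hd (differentiableAt_const w)]
  simp

lemma aux_symm (hU : IsOpen U) (hf : ContDiffOn ℝ (⊤:ℕ∞) f U) (hp : p ∈ U)
    (w w' : (Fin 3 → ℝ) × ℝ) :
    fderiv ℝ (fderiv ℝ f) p w w' = fderiv ℝ (fderiv ℝ f) p w' w :=
  ((hf.contDiffAt (hU.mem_nhds hp)).isSymmSndFDerivAt (by
    rw [minSmoothness_of_isRCLikeNormedField]; exact WithTop.coe_le_coe.mpr le_top)) w w'

lemma aux_commute (hU : IsOpen U) (hf : ContDiffOn ℝ (⊤:ℕ∞) f U) (hp : p ∈ U) (i : Fin 3) :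
    pdx i (pdk f) p = pdk (pdx i f) p := by
  show fderiv ℝ (fun q => fderiv ℝ f q (0,1)) p (Pi.single i 1, 0)
      = fderiv ℝ (fun q => fderiv ℝ f q (Pi.single i 1, 0)) p (0,1)
  rw [aux_fderiv_eval hU hf hp, aux_fderiv_eval hU hf hp, aux_symm hU hf hp]

lemma aux_contDiffOn_eval (hU : IsOpen U) (hf : ContDiffOn ℝ (⊤:ℕ∞) f U)
    (w : (Fin 3 → ℝ) × ℝ) : ContDiffOn ℝ (⊤:ℕ∞) (fun q => fderiv ℝ f q w) U := by
  have h := hf.fderiv_of_isOpen hU (m := (⊤:ℕ∞)) (by exact_mod_cast le_top)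
  exact (ContinuousLinearMap.apply ℝ ℂ w).contDiff.comp_contDiffOn h

lemma aux_contDiffOn_pdx (hU : IsOpen U) (hf : ContDiffOn ℝ (⊤:ℕ∞) f U) (i : Fin 3) :
    ContDiffOn ℝ (⊤:ℕ∞) (pdx i f) U := aux_contDiffOn_eval hU hf _

lemma aux_contDiffOn_pdk (hU : IsOpen U) (hf : ContDiffOn ℝ (⊤:ℕ∞) f U) :
    ContDiffOn ℝ (⊤:ℕ∞) (pdk f) U := aux_contDiffOn_eval hU hf _

lemma aux_hasDerivAt_k (hU : IsOpen U) (hf : ContDiffOn ℝ (⊤:ℕ∞) f U)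
    {x : Fin 3 → ℝ} {s : ℝ} (h : (x, s) ∈ U) :
    HasDerivAt (fun t => f (x, t)) (pdk f (x, s)) s := by
  have hd : DifferentiableAt ℝ f (x, s) :=
    (hf.contDiffAt (hU.mem_nhds h)).differentiableAt (by simp)
  have h2 : HasDerivAt (fun t : ℝ => ((x, t) : (Fin 3 → ℝ) × ℝ)) (0, 1) s :=
    (hasDerivAt_const s x).prodMk (hasDerivAt_id s)
  exact hd.hasFDerivAt.comp_hasDerivAt s h2

lemma aux_fderiv_comp_incl {g : (Fin 3 → ℝ) × ℝ → ℂ} {x : Fin 3 → ℝ} {c : ℝ}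
    (hg : DifferentiableAt ℝ g (x, c)) (w : Fin 3 → ℝ) :
    fderiv ℝ (fun z => g (z, c)) x w = fderiv ℝ g (x, c) (w, 0) := by
  have hi : HasFDerivAt (fun z : Fin 3 → ℝ => ((z, c) : (Fin 3 → ℝ) × ℝ))
      ((ContinuousLinearMap.id ℝ (Fin 3 → ℝ)).prod 0) x :=
    (hasFDerivAt_id x).prodMk (hasFDerivAt_const c x)
  have h := hg.hasFDerivAt.comp x hi
  rw [show (fun z => g (z, c)) = (g ∘ fun z : Fin 3 → ℝ => ((z, c) : (Fin 3 → ℝ) × ℝ)) from rfl,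
    h.fderiv]
  simp

end aux

/-- the integro-differential equation satisfied by `q = ∂ₖv` and the tail
`V = v(·, k̄)`. -/


theorem stmt2 (Ω : Set (Fin 3 → ℝ)) (hΩ : IsOpen Ω) (kl ku δ : ℝ)
    (hkl : 0 < kl) (hk : kl < ku) (hδ : 0 < δ)
    (ε : (Fin 3 → ℝ) → ℝ) (v : (Fin 3 → ℝ) × ℝ → ℂ)
    (hv : ContDiffOn ℝ (⊤ : ℕ∞) v (Ω ×ˢ Set.Ioo (kl - δ) (ku + δ)))
    (heq : ∀ x ∈ Ω, ∀ k ∈ Set.Icc kl ku,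
      lapx v (x, k) + cdot (gradx v (x, k)) (gradx v (x, k)) = -((k : ℂ) ^ 2 * (ε x : ℂ)))
    (q : (Fin 3 → ℝ) × ℝ → ℂ) (hq : q = pdk v)
    (V : (Fin 3 → ℝ) → ℂ) (hV : ∀ x, V x = v (x, ku)) :
    ∀ x ∈ Ω, ∀ k ∈ Set.Icc kl ku,
      ((k : ℂ) / 2) * lapx q (x, k) +
          (k : ℂ) * cdot (gradx q (x, k))
            (fun i => -(∫ s in k..ku, pdx i q (x, s)) + grad3 V x i) =
        -(∫ s in k..ku, lapx q (x, s)) + lap3 V x +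
          cdot (fun i => -(∫ s in k..ku, pdx i q (x, s)) + grad3 V x i)
            (fun i => -(∫ s in k..ku, pdx i q (x, s)) + grad3 V x i) := by
  subst hq
  have hV' : V = fun y => v (y, ku) := funext hV
  subst hV'
  intro x hx k hkk
  obtain ⟨hk1, hk2⟩ := hkk
  set U : Set ((Fin 3 → ℝ) × ℝ) := Ω ×ˢ Set.Ioo (kl - δ) (ku + δ) with hUdef
  have hU : IsOpen U := hΩ.prod isOpen_Ioo
  have hmem : ∀ s ∈ Set.Icc kl ku, ((x, s) : (Fin 3 → ℝ) × ℝ) ∈ U := by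
    intro s hs
    exact ⟨hx, by constructor <;> [linarith [hs.1]; linarith [hs.2]]⟩
  have hkuI : ((x, ku) : (Fin 3 → ℝ) × ℝ) ∈ U := hmem ku ⟨le_of_lt hk, le_refl ku⟩
  have hkmem := hmem k ⟨hk1, hk2⟩
  -- smoothness of spatial derivatives
  have hA : ∀ i, ContDiffOn ℝ (⊤:ℕ∞) (pdx i v) U := fun i => aux_contDiffOn_pdx hU hv i
  have hB : ∀ i, ContDiffOn ℝ (⊤:ℕ∞) (pdx i (pdx i v)) U :=
    fun i => aux_contDiffOn_pdx hU (hA i) i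
  -- commuting derivatives
  have hcomm1 : ∀ i, ∀ p ∈ U, pdx i (pdk v) p = pdk (pdx i v) p :=
    fun i p hp => aux_commute hU hv hp i
  have hcomm2 : ∀ i, ∀ p ∈ U, pdx i (pdx i (pdk v)) p = pdk (pdx i (pdx i v)) p := by
    intro i p hp
    have e1 : pdx i (pdk v) =ᶠ[nhds p] pdk (pdx i v) :=
      Filter.eventuallyEq_of_mem (hU.mem_nhds hp) (fun z hz => hcomm1 i z hz)
    have e2 : fderiv ℝ (pdx i (pdk v)) p = fderiv ℝ (pdk (pdx i v)) p := e1.fderiv_eq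
    calc pdx i (pdx i (pdk v)) p
        = fderiv ℝ (pdx i (pdk v)) p (Pi.single i 1, 0) := rfl
      _ = fderiv ℝ (pdk (pdx i v)) p (Pi.single i 1, 0) := by rw [e2]
      _ = pdx i (pdk (pdx i v)) p := rfl
      _ = pdk (pdx i (pdx i v)) p := aux_commute hU (hA i) hp i
  -- derivatives in k
  have ha' : ∀ i, ∀ s ∈ Set.Icc kl ku,
      HasDerivAt (fun t => pdx i v (x, t)) (pdx i (pdk v) (x, s)) s := by
    intro i s hs
    have := aux_hasDerivAt_k hU (hA i) (hmem s hs)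
    rwa [← hcomm1 i _ (hmem s hs)] at this
  have hb' : ∀ i, ∀ s ∈ Set.Icc kl ku,
      HasDerivAt (fun t => pdx i (pdx i v) (x, t)) (pdx i (pdx i (pdk v)) (x, s)) s := by
    intro i s hs
    have := aux_hasDerivAt_k hU (hB i) (hmem s hs)
    rwa [← hcomm2 i _ (hmem s hs)] at this
  -- continuity / integrability on [k, ku]
  have hcurve : ContinuousOn (fun s : ℝ => ((x, s) : (Fin 3 → ℝ) × ℝ)) (Set.Icc k ku) :=
    (Continuous.prodMk_right x).continuousOn
  have hIccsub : Set.Icc k ku ⊆ Set.Icc kl ku := Set.Icc_subset_Icc hk1 le_rfl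
  have hmaps : ∀ s ∈ Set.Icc k ku, ((x, s) : (Fin 3 → ℝ) × ℝ) ∈ U :=
    fun s hs => hmem s (hIccsub hs)
  have hInt1 : ∀ i, IntervalIntegrable (fun s => pdx i (pdk v) (x, s)) MeasureTheory.volume k ku := by
    intro i
    have hc : ContinuousOn (fun s => pdk (pdx i v) (x, s)) (Set.Icc k ku) :=
      (aux_contDiffOn_pdk hU (hA i)).continuousOn.comp hcurve hmaps
    have hc' : ContinuousOn (fun s => pdx i (pdk v) (x, s)) (Set.Icc k ku) :=
      hc.congr (fun s hs => hcomm1 i _ (hmaps s hs))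
    exact (hc'.mono (by rw [Set.uIcc_of_le hk2])).intervalIntegrable
  have hInt2 : ∀ i, IntervalIntegrable (fun s => pdx i (pdx i (pdk v)) (x, s))
      MeasureTheory.volume k ku := by
    intro i
    have hc : ContinuousOn (fun s => pdk (pdx i (pdx i v)) (x, s)) (Set.Icc k ku) :=
      (aux_contDiffOn_pdk hU (hB i)).continuousOn.comp hcurve hmaps
    have hc' : ContinuousOn (fun s => pdx i (pdx i (pdk v)) (x, s)) (Set.Icc k ku) :=
      hc.congr (fun s hs => hcomm2 i _ (hmaps s hs))
    exact (hc'.mono (by rw [Set.uIcc_of_le hk2])).intervalIntegrable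
  -- FTC
  have hFTC1 : ∀ i, (∫ s in k..ku, pdx i (pdk v) (x, s)) = pdx i v (x, ku) - pdx i v (x, k) := by
    intro i
    apply intervalIntegral.integral_eq_sub_of_hasDerivAt
    · intro s hs
      rw [Set.uIcc_of_le hk2] at hs
      exact ha' i s (hIccsub hs)
    · exact hInt1 i
  have hFTC2 : ∀ i, (∫ s in k..ku, pdx i (pdx i (pdk v)) (x, s))
      = pdx i (pdx i v) (x, ku) - pdx i (pdx i v) (x, k) := by
    intro i
    apply intervalIntegral.integral_eq_sub_of_hasDerivAt
    · intro s hs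
      rw [Set.uIcc_of_le hk2] at hs
      exact hb' i s (hIccsub hs)
    · exact hInt2 i
  -- the gradient and Laplacian of V
  have hdv : ∀ y ∈ Ω, DifferentiableAt ℝ v (y, ku) := fun y hy =>
    (hv.contDiffAt (hU.mem_nhds ⟨hy, by constructor <;> linarith⟩)).differentiableAt
      (by simp)
  have hpdV : ∀ i, ∀ y ∈ Ω, pd i (fun z => v (z, ku)) y = pdx i v (y, ku) :=
    fun i y hy => aux_fderiv_comp_incl (hdv y hy) _
  have hgV : ∀ i, grad3 (fun z => v (z, ku)) x i = pdx i v (x, ku) := fun i => hpdV i x hx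
  have hlV : lap3 (fun z => v (z, ku)) x = ∑ i, pdx i (pdx i v) (x, ku) := by
    unfold lap3
    refine Finset.sum_congr rfl (fun i _ => ?_)
    have hE : pd i (fun z => v (z, ku)) =ᶠ[nhds x] fun y => pdx i v (y, ku) :=
      Filter.eventuallyEq_of_mem (hΩ.mem_nhds hx) (fun y hy => hpdV i y hy)
    have hdAi : DifferentiableAt ℝ (pdx i v) (x, ku) :=
      ((hA i).contDiffAt (hU.mem_nhds hkuI)).differentiableAt (by simp)
    calc pd i (pd i (fun z => v (z, ku))) x
        = fderiv ℝ (pd i (fun z => v (z, ku))) x (Pi.single i 1) := rfl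
      _ = fderiv ℝ (fun y => pdx i v (y, ku)) x (Pi.single i 1) := by rw [hE.fderiv_eq]
      _ = pdx i (pdx i v) (x, ku) := aux_fderiv_comp_incl hdAi _
  -- the differentiated PDE at k
  have hsum1 : HasDerivAt (fun s => ∑ i, pdx i (pdx i v) (x, s))
      (∑ i, pdx i (pdx i (pdk v)) (x, k)) k :=
    HasDerivAt.fun_sum (fun i _ => hb' i k ⟨hk1, hk2⟩)
  have hsq : ∀ i : Fin 3, HasDerivAt (fun s => pdx i v (x, s) * pdx i v (x, s))
      (2 * (pdx i (pdk v) (x, k) * pdx i v (x, k))) k := by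
    intro i
    have h := (ha' i k ⟨hk1, hk2⟩).mul (ha' i k ⟨hk1, hk2⟩)
    exact h.congr_deriv (by ring)
  have hsum2 : HasDerivAt (fun s => ∑ i, pdx i v (x, s) * pdx i v (x, s))
      (∑ i : Fin 3, 2 * (pdx i (pdk v) (x, k) * pdx i v (x, k))) k :=
    HasDerivAt.fun_sum (fun i _ => hsq i)
  have hF : HasDerivAt
      (fun s => (∑ i, pdx i (pdx i v) (x, s)) + ∑ i, pdx i v (x, s) * pdx i v (x, s))
      ((∑ i, pdx i (pdx i (pdk v)) (x, k))
        + ∑ i : Fin 3, 2 * (pdx i (pdk v) (x, k) * pdx i v (x, k))) k := hsum1.add hsum2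
  have hG : HasDerivAt (fun s : ℝ => -((s : ℂ) ^ 2 * (ε x : ℂ)))
      (-(2 * (k : ℂ) * (ε x : ℂ))) k := by
    have h0 : HasDerivAt (fun s : ℝ => (s : ℂ)) 1 k := by
      simpa using (hasDerivAt_id k).ofReal_comp
    have h1 := (((h0.mul h0).mul_const ((ε x : ℂ))).neg)
    simp only [pow_two]
    exact h1.congr_deriv (by ring)
  have hFG : Set.EqOn
      (fun s => (∑ i, pdx i (pdx i v) (x, s)) + ∑ i, pdx i v (x, s) * pdx i v (x, s))
      (fun s : ℝ => -((s : ℂ) ^ 2 * (ε x : ℂ))) (Set.Icc kl ku) := by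
    intro s hs
    have := heq x hx s hs
    simpa [lapx, cdot, gradx] using this
  have hFd' : HasDerivWithinAt (fun s : ℝ => -((s : ℂ) ^ 2 * (ε x : ℂ)))
      ((∑ i, pdx i (pdx i (pdk v)) (x, k))
        + ∑ i : Fin 3, 2 * (pdx i (pdk v) (x, k) * pdx i v (x, k))) (Set.Icc kl ku) k :=
    (hF.hasDerivWithinAt).congr (fun y hy => (hFG hy).symm) (hFG ⟨hk1, hk2⟩).symm
  have huniq : ((∑ i, pdx i (pdx i (pdk v)) (x, k))
        + ∑ i : Fin 3, 2 * (pdx i (pdk v) (x, k) * pdx i v (x, k)))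
      = -(2 * (k : ℂ) * (ε x : ℂ)) :=
    UniqueDiffWithinAt.eq_deriv _ (uniqueDiffOn_Icc hk k ⟨hk1, hk2⟩) hFd'
      hG.hasDerivWithinAt
  have huniq' : ((∑ i, pdx i (pdx i (pdk v)) (x, k))
        + 2 * ∑ i : Fin 3, pdx i (pdk v) (x, k) * pdx i v (x, k))
      = -(2 * (k : ℂ) * (ε x : ℂ)) := by
    rw [Finset.mul_sum]; exact huniq
  have hFk : (∑ i, pdx i (pdx i v) (x, k)) + ∑ i, pdx i v (x, k) * pdx i v (x, k)
      = -((k : ℂ) ^ 2 * (ε x : ℂ)) := hFG ⟨hk1, hk2⟩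
  -- rewrite the goal
  have hW : ∀ i, -(∫ s in k..ku, pdx i (pdk v) (x, s)) + grad3 (fun z => v (z, ku)) x i
      = pdx i v (x, k) := by
    intro i
    rw [hFTC1 i, hgV i]; ring
  have hIlap : (∫ s in k..ku, lapx (pdk v) (x, s))
      = (∑ i, pdx i (pdx i v) (x, ku)) - ∑ i, pdx i (pdx i v) (x, k) := by
    calc (∫ s in k..ku, lapx (pdk v) (x, s))
        = ∫ s in k..ku, ∑ i, pdx i (pdx i (pdk v)) (x, s) := rfl
      _ = ∑ i, ∫ s in k..ku, pdx i (pdx i (pdk v)) (x, s) :=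
          intervalIntegral.integral_finset_sum (fun i _ => hInt2 i)
      _ = ∑ i, (pdx i (pdx i v) (x, ku) - pdx i (pdx i v) (x, k)) :=
          Finset.sum_congr rfl (fun i _ => hFTC2 i)
      _ = (∑ i, pdx i (pdx i v) (x, ku)) - ∑ i, pdx i (pdx i v) (x, k) :=
          Finset.sum_sub_distrib _ _
  rw [hIlap]
  simp only [lapx, cdot, gradx, hW, hlV]
  linear_combination ((k : ℂ) / 2) * huniq' - hFk
end
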